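/- Let $H_k$ and $H_\ell$ be reproducing kernel Hilbert spaces on a set $X$ with kernels $k$ and $\ell$. If the pointwise difference $k - \ell$ is a positive semi-definite kernel, then $H_\ell \subseteq H_k$ as sets and the inclusion map $H_\ell \to H_k$ is a contraction (i.e., $\|f\|_{H_k} \leq \|f\|_{H_\ell}$ for all $f \in H_\ell$). -/

import Mathlib

open scoped ComplexConjugate ComplexInnerProductSpace BigOperators

/-- A scalar positive semi-definite kernel on a set `X`. -/
def IsPSDKernel {X : Type*} (k : X → X → ℂ) : Prop :=
  ∀ (n : ℕ) (x : Fin n → X) (c : Fin n → ℂ),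
    0 ≤ (∑ a : Fin n, ∑ b : Fin n, conj (c a) * c b * k (x a) (x b)).re ∧
    (∑ a : Fin n, ∑ b : Fin n, conj (c a) * c b * k (x a) (x b)).im = 0

lemma aux_norm_sq_sum {H : Type*} [NormedAddCommGroup H] [InnerProductSpace ℂ H]
    {X : Type*} (φ : X → H) (s : Finset X) (c : X → ℂ) :
    (‖∑ x ∈ s, c x • φ x‖ : ℝ) ^ 2
      = (∑ a ∈ s, ∑ b ∈ s, conj (c a) * c b * ⟪φ a, φ b⟫).re := by
  have h : ⟪∑ x ∈ s, c x • φ x, ∑ x ∈ s, c x • φ x⟫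
      = ∑ a ∈ s, ∑ b ∈ s, conj (c a) * c b * ⟪φ a, φ b⟫ := by
    rw [sum_inner]
    refine Finset.sum_congr rfl fun a _ => ?_
    rw [inner_sum]
    refine Finset.sum_congr rfl fun b _ => ?_
    rw [inner_smul_left, inner_smul_right]; ring
  rw [← inner_self_eq_norm_sq (𝕜 := ℂ), h]; rfl

/-- Aronszajn's inclusion theorem: if `k - ℓ` is positive semi-definite, then
`H_ℓ ⊆ H_k` as sets of functions, and the inclusion is a contraction.  Both
RKHSs are modelled as Hilbert spaces with injective linear realizations as
functions and kernel vectors satisfying the reproducing property. -/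
theorem rkhs_inclusion_of_difference_psd {X : Type*}
    {Hk : Type*} [NormedAddCommGroup Hk] [InnerProductSpace ℂ Hk] [CompleteSpace Hk]
    {Hl : Type*} [NormedAddCommGroup Hl] [InnerProductSpace ℂ Hl] [CompleteSpace Hl]
    (vk : Hk →ₗ[ℂ] (X → ℂ)) (hvk : Function.Injective vk)
    (kfun : X → Hk) (hrepk : ∀ (f : Hk) (x : X), ⟪kfun x, f⟫ = vk f x)
    (vl : Hl →ₗ[ℂ] (X → ℂ)) (hvl : Function.Injective vl)
    (lfun : X → Hl) (hrepl : ∀ (g : Hl) (x : X), ⟪lfun x, g⟫ = vl g x)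
    (k l : X → X → ℂ) (hk : ∀ z w, k z w = vk (kfun w) z)
    (hl : ∀ z w, l z w = vl (lfun w) z)
    (hdiff : IsPSDKernel (fun z w => k z w - l z w)) :
    ∀ g : Hl, ∃ f : Hk, vk f = vl g ∧ ‖f‖ ≤ ‖g‖ := by
  classical
  have hkk : ∀ a b, ⟪kfun a, kfun b⟫ = k a b := fun a b => by rw [hrepk, ← hk]
  have hll : ∀ a b, ⟪lfun a, lfun b⟫ = l a b := fun a b => by rw [hrepl, ← hl]
  -- Finset version of the PSD hypothesis
  have hpsd : ∀ (s : Finset X) (c : X → ℂ),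
      0 ≤ (∑ a ∈ s, ∑ b ∈ s, conj (c a) * c b * (k a b - l a b)).re := by
    intro s c
    have e : (s : Type _) ≃ Fin s.card := Fintype.equivFinOfCardEq (Fintype.card_coe s)
    have h := (hdiff s.card (fun i => (e.symm i : X)) (fun i => c (e.symm i))).1
    have hsum : ∑ i : Fin s.card, ∑ j : Fin s.card,
        conj (c (e.symm i : X)) * c (e.symm j : X)
          * (k (e.symm i : X) (e.symm j : X) - l (e.symm i : X) (e.symm j : X))
        = ∑ a ∈ s, ∑ b ∈ s, conj (c a) * c b * (k a b - l a b) := by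
      rw [Equiv.sum_comp e.symm
        (fun a : s => ∑ j : Fin s.card,
          conj (c (a : X)) * c (e.symm j : X) * (k (a : X) (e.symm j : X) - l (a : X) (e.symm j : X)))]
      rw [← Finset.sum_coe_sort s (fun a => ∑ b ∈ s, conj (c a) * c b * (k a b - l a b))]
      refine Finset.sum_congr rfl fun a _ => ?_
      rw [Equiv.sum_comp e.symm
        (fun b : s => conj (c (a : X)) * c (b : X) * (k (a : X) (b : X) - l (a : X) (b : X)))]
      rw [← Finset.sum_coe_sort s (fun b => conj (c (a : X)) * c b * (k (a : X) b - l (a : X) b))]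
    rwa [hsum] at h
  -- contraction on finite sums
  have key : ∀ (s : Finset X) (c : X → ℂ),
      ‖∑ x ∈ s, c x • lfun x‖ ≤ ‖∑ x ∈ s, c x • kfun x‖ := by
    intro s c
    have h1 := aux_norm_sq_sum kfun s c
    have h2 := aux_norm_sq_sum lfun s c
    have h3 : (∑ a ∈ s, ∑ b ∈ s, conj (c a) * c b * (k a b - l a b))
        = (∑ a ∈ s, ∑ b ∈ s, conj (c a) * c b * ⟪kfun a, kfun b⟫)
          - (∑ a ∈ s, ∑ b ∈ s, conj (c a) * c b * ⟪lfun a, lfun b⟫) := by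
      rw [← Finset.sum_sub_distrib]
      refine Finset.sum_congr rfl fun a _ => ?_
      rw [← Finset.sum_sub_distrib]
      refine Finset.sum_congr rfl fun b _ => ?_
      rw [hkk, hll]; ring
    have h4 := hpsd s c
    rw [h3, Complex.sub_re] at h4
    have h5 : ‖∑ x ∈ s, c x • lfun x‖ ^ 2 ≤ ‖∑ x ∈ s, c x • kfun x‖ ^ 2 := by
      rw [h1, h2]; linarith
    nlinarith [norm_nonneg (∑ x ∈ s, c x • lfun x), norm_nonneg (∑ x ∈ s, c x • kfun x)]
  -- the doubled space
  let E := WithLp 2 (Hk × Hl)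
  let φ : X → E := fun x => (WithLp.equiv 2 (Hk × Hl)).symm (kfun x, lfun x)
  let N : Submodule ℂ E := (Submodule.span ℂ (Set.range φ)).topologicalClosure
  have hφN : ∀ x, φ x ∈ N :=
    fun x => Submodule.le_topologicalClosure _ (Submodule.subset_span (Set.mem_range_self x))
  let Lfst : E →ₗ[ℂ] Hk :=
    (LinearMap.fst ℂ Hk Hl).comp (WithLp.linearEquiv 2 ℂ (Hk × Hl)).toLinearMap
  -- the contraction property on N
  have hcontr : ∀ p : E, p ∈ N → ‖p.snd‖ ≤ ‖p.fst‖ := by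
    have hcl : IsClosed {p : E | ‖p.snd‖ ≤ ‖p.fst‖} := by
      have hc1 : Continuous fun p : E => p.fst :=
        (continuous_fst.comp (WithLp.prodContinuousLinearEquiv 2 ℂ Hk Hl).continuous)
      have hc2 : Continuous fun p : E => p.snd :=
        (continuous_snd.comp (WithLp.prodContinuousLinearEquiv 2 ℂ Hk Hl).continuous)
      exact isClosed_le (hc2.norm) (hc1.norm)
    have hsub : (Submodule.span ℂ (Set.range φ) : Set E) ⊆ {p : E | ‖p.snd‖ ≤ ‖p.fst‖} := by
      intro p hp
      obtain ⟨c, rfl⟩ := Finsupp.mem_span_range_iff_exists_finsupp.mp hp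
      let Lsnd : E →ₗ[ℂ] Hl :=
        (LinearMap.snd ℂ Hk Hl).comp (WithLp.linearEquiv 2 ℂ (Hk × Hl)).toLinearMap
      have h1 : (c.sum fun x a => a • φ x).fst = ∑ x ∈ c.support, c x • kfun x := by
        have : (c.sum fun x a => a • φ x).fst = Lfst (c.sum fun x a => a • φ x) := rfl
        rw [this, map_finsuppSum, Finsupp.sum]
        exact Finset.sum_congr rfl fun x _ => rfl
      have h2 : (c.sum fun x a => a • φ x).snd = ∑ x ∈ c.support, c x • lfun x := by
        have : (c.sum fun x a => a • φ x).snd = Lsnd (c.sum fun x a => a • φ x) := rfl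
        rw [this, map_finsuppSum, Finsupp.sum]
        exact Finset.sum_congr rfl fun x _ => rfl
      simp only [Set.mem_setOf_eq, h1, h2]
      exact key _ _
    intro p hp
    exact closure_minimal hsub hcl hp
  -- norm comparisons in E
  have hnorm_fst : ∀ p : E, p ∈ N → ‖p‖ ≤ 2 * ‖p.fst‖ := by
    intro p hp
    have h := WithLp.prod_norm_sq_eq_of_L2 p
    have h2 := hcontr p hp
    nlinarith [norm_nonneg p, norm_nonneg p.fst, norm_nonneg p.snd]
  have hfst_norm : ∀ p : E, ‖p.fst‖ ≤ ‖p‖ := by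
    intro p
    have h := WithLp.prod_norm_sq_eq_of_L2 p
    nlinarith [norm_nonneg p, norm_nonneg p.fst, norm_nonneg p.snd]
  -- the image of N under the first projection is closed
  haveI : CompleteSpace N := (Submodule.isClosed_topologicalClosure _).completeSpace_coe
  have hMclosed : IsClosed ((N.map Lfst : Submodule ℂ Hk) : Set Hk) := by
    have hrange : ((N.map Lfst : Submodule ℂ Hk) : Set Hk)
        = Set.range (fun p : N => (p : E).fst) := by
      ext u
      simp only [SetLike.mem_coe, Submodule.mem_map, Set.mem_range]
      constructor
      · rintro ⟨p, hp, rfl⟩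
        exact ⟨⟨p, hp⟩, rfl⟩
      · rintro ⟨p, rfl⟩
        exact ⟨(p : E), p.2, rfl⟩
    rw [hrange]
    have hanti : AntilipschitzWith 2 (fun p : N => (p : E).fst) := by
      apply AntilipschitzWith.of_le_mul_dist
      intro p q
      have hmem : ((p : E) - (q : E)) ∈ N := sub_mem p.2 q.2
      have := hnorm_fst _ hmem
      rw [Subtype.dist_eq, dist_eq_norm, dist_eq_norm, ← WithLp.sub_fst]
      have h2 : ((2 : NNReal) : ℝ) = 2 := rfl
      rw [h2]
      exact this
    have hlip : LipschitzWith 1 (fun p : N => (p : E).fst) := by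
      apply LipschitzWith.of_dist_le_mul
      intro p q
      rw [Subtype.dist_eq, dist_eq_norm, dist_eq_norm, ← WithLp.sub_fst]
      rw [NNReal.coe_one, one_mul]
      exact hfst_norm ((p : E) - (q : E))
    exact hanti.isClosed_range hlip.uniformContinuous
  -- the image is everything
  have hMtop : N.map Lfst = ⊤ := by
    have hdense : (Submodule.span ℂ (Set.range kfun)).topologicalClosure = ⊤ := by
      rw [Submodule.topologicalClosure_eq_top_iff]
      rw [Submodule.eq_bot_iff]
      intro f hf
      apply hvk
      rw [map_zero]
      funext x
      have : ⟪kfun x, f⟫ = 0 :=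
        (Submodule.mem_orthogonal _ f).mp hf _ (Submodule.subset_span (Set.mem_range_self x))
      rw [← hrepk]
      simpa using this
    have hle : Submodule.span ℂ (Set.range kfun) ≤ N.map Lfst := by
      rw [Submodule.span_le]
      rintro - ⟨x, rfl⟩
      exact ⟨φ x, hφN x, rfl⟩
    have := Submodule.topologicalClosure_minimal _ hle hMclosed
    rw [hdense] at this
    exact top_le_iff.mp this
  -- uniqueness of the second coordinate
  have huniq : ∀ p q : E, p ∈ N → q ∈ N → p.fst = q.fst → p.snd = q.snd := by
    intro p q hp hq hfst
    have hmem : (p - q) ∈ N := sub_mem hp hq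
    have h1 : ‖(p - q).snd‖ ≤ ‖(p - q).fst‖ := hcontr _ hmem
    rw [WithLp.sub_fst, WithLp.sub_snd, hfst, sub_self, norm_zero] at h1
    have := le_antisymm h1 (norm_nonneg _)
    rwa [norm_eq_zero, sub_eq_zero] at this
  -- existence of the pair for each u
  have hex : ∀ u : Hk, ∃ p : E, p ∈ N ∧ p.fst = u := by
    intro u
    have : u ∈ N.map Lfst := by rw [hMtop]; trivial
    obtain ⟨p, hp, hpu⟩ := this
    exact ⟨p, hp, hpu⟩
  -- the contraction operator
  let T0 : Hk → Hl := fun u => (Classical.choose (hex u)).snd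
  have hT0 : ∀ u : Hk, (Classical.choose (hex u)) ∈ N ∧ (Classical.choose (hex u)).fst = u :=
    fun u => Classical.choose_spec (hex u)
  have hT0eq : ∀ (u : Hk) (p : E), p ∈ N → p.fst = u → T0 u = p.snd := by
    intro u p hp hpu
    exact huniq _ _ (hT0 u).1 hp ((hT0 u).2.trans hpu.symm)
  have hT0add : ∀ u v : Hk, T0 (u + v) = T0 u + T0 v := by
    intro u v
    have hmem : Classical.choose (hex u) + Classical.choose (hex v) ∈ N :=
      add_mem (hT0 u).1 (hT0 v).1
    have hfst : (Classical.choose (hex u) + Classical.choose (hex v)).fst = u + v := by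
      rw [WithLp.add_fst, (hT0 u).2, (hT0 v).2]
    rw [hT0eq (u + v) _ hmem hfst, WithLp.add_snd]
  have hT0smul : ∀ (a : ℂ) (u : Hk), T0 (a • u) = a • T0 u := by
    intro a u
    have hmem : a • Classical.choose (hex u) ∈ N := N.smul_mem a (hT0 u).1
    have hfst : (a • Classical.choose (hex u)).fst = a • u := by
      rw [WithLp.smul_fst, (hT0 u).2]
    rw [hT0eq (a • u) _ hmem hfst, WithLp.smul_snd]
  have hT0norm : ∀ u : Hk, ‖T0 u‖ ≤ 1 * ‖u‖ := by
    intro u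
    have := hcontr _ (hT0 u).1
    rw [(hT0 u).2] at this
    simpa using this
  let Tlin : Hk →ₗ[ℂ] Hl :=
    { toFun := T0, map_add' := hT0add, map_smul' := hT0smul }
  let T : Hk →L[ℂ] Hl := LinearMap.mkContinuous Tlin 1 hT0norm
  have hTnorm : ‖T‖ ≤ 1 := LinearMap.mkContinuous_norm_le Tlin zero_le_one hT0norm
  have hTk : ∀ x : X, T (kfun x) = lfun x := by
    intro x
    show T0 (kfun x) = lfun x
    exact hT0eq (kfun x) (φ x) (hφN x) rfl
  -- conclude via the adjoint
  intro g
  refine ⟨ContinuousLinearMap.adjoint T g, ?_, ?_⟩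
  · funext x
    rw [← hrepk, ContinuousLinearMap.adjoint_inner_right, hTk, hrepl]
  · calc ‖ContinuousLinearMap.adjoint T g‖ ≤ ‖ContinuousLinearMap.adjoint T‖ * ‖g‖ :=
        ContinuousLinearMap.le_opNorm _ _
      _ ≤ 1 * ‖g‖ := by
        have : ‖ContinuousLinearMap.adjoint T‖ = ‖T‖ :=
          ContinuousLinearMap.adjoint.norm_map T
        rw [this]
        exact mul_le_mul_of_nonneg_right hTnorm (norm_nonneg g)
      _ = ‖g‖ := one_mul _
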